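/- Let n ≥ 2 be even and let a_1, …, a_n be integers with a_i ≥ 2, and let w = x_n x_1^{a_1} + Σ_{i=2}^{n} x_{i−1} x_i^{a_i} ∈ ℂ[x_1, …, x_n] (the dual loop polynomial). Then in the Milnor ring Q_w = ℂ[x_1, …, x_n]/(∂w/∂x_1, …, ∂w/∂x_n) one has [ ∏_{j even} x_j^{a_j − 1} ]^2 = ( ∏_{j odd} (−a_j) ) · [ ∏_{i=1}^{n} x_i^{a_i − 1} ] and [ ∏_{j odd} x_j^{a_j − 1} ]^2 = ( ∏_{j even} (−a_j) ) · [ ∏_{i=1}^{n} x_i^{a_i − 1} ]. -/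

import Mathlib

open MvPolynomial Finset

private lemma fin_sub_one_val {m : ℕ} (i : Fin (m+2)) :
    ((i - 1 : Fin (m+2)) : ℕ) = if (i : ℕ) = 0 then m+1 else (i : ℕ) - 1 := by
  rw [Fin.sub_def]
  simp only [Fin.val_one]
  split_ifs with h
  · rw [h, Nat.add_zero, Nat.mod_eq_of_lt (by omega)]; omega
  · rw [show m + 2 - 1 + (i:ℕ) = ((i:ℕ) - 1) + (m+2) by omega, Nat.add_mod_right,
      Nat.mod_eq_of_lt (by omega)]

private lemma fin_sub_one_parity {m : ℕ} (hev : 2 ∣ (m+2)) (i : Fin (m+2)) :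
    ((i - 1 : Fin (m+2)) : ℕ) % 2 = ((i : ℕ) + 1) % 2 := by
  rw [fin_sub_one_val]
  have := i.isLt
  split_ifs with h <;> omega

private lemma fin_add_one_parity {m : ℕ} (hev : 2 ∣ (m+2)) (i : Fin (m+2)) :
    ((i + 1 : Fin (m+2)) : ℕ) % 2 = ((i : ℕ) + 1) % 2 := by
  rw [Fin.add_def]
  simp only [Fin.val_one]
  rw [Nat.mod_mod_of_dvd _ hev]

private lemma fin_sub_two_parity {m : ℕ} (hev : 2 ∣ (m+2)) (i : Fin (m+2)) :
    ((i - 2 : Fin (m+2)) : ℕ) % 2 = (i : ℕ) % 2 := by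
  rw [Fin.sub_def]
  show (m + 2 - ((2:ℕ) % (m+2)) + (i:ℕ)) % (m+2) % 2 = _
  rw [Nat.mod_mod_of_dvd _ hev]
  have h2 : (2:ℕ) % (m+2) = 0 ∨ (2:ℕ) % (m+2) = 2 := by
    rcases m with _ | m
    · left; rfl
    · right; exact Nat.mod_eq_of_lt (by omega)
  rcases h2 with h2 | h2 <;> rw [h2] <;> omega

private lemma fin_add_two_parity {m : ℕ} (hev : 2 ∣ (m+2)) (i : Fin (m+2)) :
    ((i + 2 : Fin (m+2)) : ℕ) % 2 = (i : ℕ) % 2 := by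
  rw [Fin.add_def]
  show ((i:ℕ) + ((2:ℕ) % (m+2))) % (m+2) % 2 = _
  rw [Nat.mod_mod_of_dvd _ hev]
  have h2 : (2:ℕ) % (m+2) = 0 ∨ (2:ℕ) % (m+2) = 2 := by
    rcases m with _ | m
    · left; rfl
    · right; exact Nat.mod_eq_of_lt (by omega)
  rcases h2 with h2 | h2 <;> rw [h2] <;> omega

private lemma pderiv_term {m : ℕ} (a : ℕ → ℕ) (k i : Fin (m+2)) :
    pderiv k (X (i - 1) * X i ^ a (i:ℕ) : MvPolynomial (Fin (m+2)) ℂ) =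
      (if i = k + 1 then X i ^ a (i:ℕ) else 0) +
      (if i = k then C ((a (k:ℕ) : ℂ)) * (X (k-1) * X k ^ (a (k:ℕ) - 1)) else 0) := by
  have hone : (1 : Fin (m+2)) ≠ 0 := by
    intro h
    have := congrArg Fin.val h
    simp [Fin.val_one] at this
  rw [pderiv_mul, pderiv_pow]
  by_cases h1 : i = k + 1
  · by_cases h2 : i = k
    · exact absurd (left_eq_add.mp (h2.symm.trans h1)) hone
    · subst h1
      rw [if_pos rfl, if_neg h2, add_sub_cancel_right, pderiv_X_self,
        pderiv_X_of_ne h2]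
      ring
  · by_cases h2 : i = k
    · subst h2
      have hne : i - 1 ≠ i := fun h => hone (left_eq_add.mp (sub_eq_iff_eq_add.mp h))
      rw [if_neg h1, if_pos rfl, pderiv_X_of_ne hne, pderiv_X_self, map_natCast C]
      ring
    · have hne : i - 1 ≠ k := by
        intro h; apply h1; rw [← h, sub_add_cancel]
      rw [if_neg h1, if_neg h2, pderiv_X_of_ne hne, pderiv_X_of_ne h2]
      ring

private lemma dlbs_aux {m : ℕ} (hev : 2 ∣ (m+2)) (a : ℕ → ℕ) (ha : ∀ i < m+2, 2 ≤ a i)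
    (J : Ideal (MvPolynomial (Fin (m+2)) ℂ))
    (hkey : ∀ j : Fin (m+2), Ideal.Quotient.mk J (X j ^ a (j:ℕ)) =
      Ideal.Quotient.mk J (C (-(a ((j-1 : Fin (m+2)) : ℕ) : ℂ)) *
        (X (j-2) * X (j-1) ^ (a ((j-1 : Fin (m+2)) : ℕ) - 1))))
    (b : ℕ) (hb : b < 2) :
    Ideal.Quotient.mk J (∏ j ∈ univ.filter (fun j : Fin (m+2) => (j:ℕ) % 2 = b),
        X j ^ (a (j:ℕ) - 1)) ^ 2 =
      (∏ j ∈ univ.filter (fun j : Fin (m+2) => ¬((j:ℕ) % 2 = b)), (-(a (j:ℕ) : ℂ))) •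
        Ideal.Quotient.mk J (∏ j : Fin (m+2), X j ^ (a (j:ℕ) - 1)) := by
  set S : Finset (Fin (m+2)) := univ.filter (fun j : Fin (m+2) => (j:ℕ) % 2 = b) with hS
  set Sc : Finset (Fin (m+2)) := univ.filter (fun j : Fin (m+2) => ¬((j:ℕ) % 2 = b)) with hSc
  have memS : ∀ j : Fin (m+2), j ∈ S ↔ (j:ℕ) % 2 = b := by
    intro j; simp [hS]
  have memSc : ∀ j : Fin (m+2), j ∈ Sc ↔ ¬((j:ℕ) % 2 = b) := by
    intro j; simp [hSc]
  -- step 1 : square as product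
  have step1 : (∏ j ∈ S, (X j ^ (a (j:ℕ) - 1) : MvPolynomial (Fin (m+2)) ℂ)) ^ 2 =
      (∏ j ∈ S, X j ^ a (j:ℕ)) * (∏ j ∈ S, X j ^ (a (j:ℕ) - 2)) := by
    rw [← Finset.prod_pow, ← Finset.prod_mul_distrib]
    refine Finset.prod_congr rfl fun j _ => ?_
    rw [← pow_mul, ← pow_add]
    congr 1
    have := ha (j:ℕ) j.isLt
    omega
  -- step 2 : substitute via hkey
  have step2 : Ideal.Quotient.mk J (∏ j ∈ S, (X j ^ a (j:ℕ) : MvPolynomial (Fin (m+2)) ℂ)) =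
      Ideal.Quotient.mk J (∏ j ∈ S, (C (-(a ((j-1 : Fin (m+2)) : ℕ) : ℂ)) *
        (X (j-2) * X (j-1) ^ (a ((j-1 : Fin (m+2)) : ℕ) - 1)))) := by
    rw [map_prod, map_prod]
    exact Finset.prod_congr rfl fun j _ => hkey j
  -- step 3 : polynomial identity
  have h1 : (∏ j ∈ S, (C (-(a ((j-1 : Fin (m+2)) : ℕ) : ℂ)) : MvPolynomial (Fin (m+2)) ℂ)) =
      C (∏ j ∈ Sc, (-(a (j:ℕ) : ℂ))) := by
    rw [map_prod]
    refine Finset.prod_nbij' (fun j => j - 1) (fun k => k + 1) ?_ ?_ ?_ ?_ ?_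
    · intro j hj
      rw [memS] at hj; rw [memSc, fin_sub_one_parity hev]; omega
    · intro k hk
      rw [memSc] at hk; rw [memS, fin_add_one_parity hev]
      have := k.isLt
      omega
    · intro j _; exact sub_add_cancel j 1
    · intro k _; exact add_sub_cancel_right k 1
    · intro j _; rfl
  have h2 : (∏ j ∈ S, (X (j-1) ^ (a ((j-1 : Fin (m+2)) : ℕ) - 1) : MvPolynomial (Fin (m+2)) ℂ)) =
      ∏ k ∈ Sc, X k ^ (a (k:ℕ) - 1) := by
    refine Finset.prod_nbij' (fun j => j - 1) (fun k => k + 1) ?_ ?_ ?_ ?_ ?_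
    · intro j hj
      rw [memS] at hj; rw [memSc, fin_sub_one_parity hev]; omega
    · intro k hk
      rw [memSc] at hk; rw [memS, fin_add_one_parity hev]; omega
    · intro j _; exact sub_add_cancel j 1
    · intro k _; exact add_sub_cancel_right k 1
    · intro j _; rfl
  have h3 : (∏ j ∈ S, (X (j-2) : MvPolynomial (Fin (m+2)) ℂ)) = ∏ j ∈ S, X j := by
    refine Finset.prod_nbij' (fun j => j - 2) (fun k => k + 2) ?_ ?_ ?_ ?_ ?_
    · intro j hj
      rw [memS] at hj; rw [memS, fin_sub_two_parity hev]; omega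
    · intro k hk
      rw [memS] at hk; rw [memS, fin_add_two_parity hev]; omega
    · intro j _; exact sub_add_cancel j 2
    · intro k _; exact add_sub_cancel_right k 2
    · intro j _; rfl
  have h4 : (∏ j ∈ S, (X j : MvPolynomial (Fin (m+2)) ℂ)) * ∏ j ∈ S, X j ^ (a (j:ℕ) - 2) =
      ∏ j ∈ S, X j ^ (a (j:ℕ) - 1) := by
    rw [← Finset.prod_mul_distrib]
    refine Finset.prod_congr rfl fun j _ => ?_
    rw [← pow_succ']
    congr 1
    have := ha (j:ℕ) j.isLt
    omega
  have h5 : (∏ j ∈ S, (X j ^ (a (j:ℕ) - 1) : MvPolynomial (Fin (m+2)) ℂ)) *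
      ∏ j ∈ Sc, X j ^ (a (j:ℕ) - 1) = ∏ j : Fin (m+2), X j ^ (a (j:ℕ) - 1) := by
    exact Finset.prod_filter_mul_prod_filter_not univ _ _
  have step3 : (∏ j ∈ S, (C (-(a ((j-1 : Fin (m+2)) : ℕ) : ℂ)) *
        (X (j-2) * X (j-1) ^ (a ((j-1 : Fin (m+2)) : ℕ) - 1)))) *
      (∏ j ∈ S, (X j ^ (a (j:ℕ) - 2) : MvPolynomial (Fin (m+2)) ℂ)) =
      C (∏ j ∈ Sc, (-(a (j:ℕ) : ℂ))) * ∏ j : Fin (m+2), X j ^ (a (j:ℕ) - 1) := by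
    rw [Finset.prod_mul_distrib, Finset.prod_mul_distrib, h1, h2, h3, ← h5, ← h4]
    ring
  -- assemble
  calc Ideal.Quotient.mk J (∏ j ∈ S, X j ^ (a (j:ℕ) - 1)) ^ 2
      = Ideal.Quotient.mk J ((∏ j ∈ S, X j ^ a (j:ℕ)) * (∏ j ∈ S, X j ^ (a (j:ℕ) - 2))) := by
        rw [← map_pow, step1]
    _ = Ideal.Quotient.mk J (∏ j ∈ S, X j ^ a (j:ℕ)) *
        Ideal.Quotient.mk J (∏ j ∈ S, X j ^ (a (j:ℕ) - 2)) := by rw [map_mul]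
    _ = Ideal.Quotient.mk J ((∏ j ∈ S, (C (-(a ((j-1 : Fin (m+2)) : ℕ) : ℂ)) *
          (X (j-2) * X (j-1) ^ (a ((j-1 : Fin (m+2)) : ℕ) - 1)))) *
          (∏ j ∈ S, X j ^ (a (j:ℕ) - 2))) := by rw [map_mul, step2]
    _ = Ideal.Quotient.mk J (C (∏ j ∈ Sc, (-(a (j:ℕ) : ℂ))) *
          ∏ j : Fin (m+2), X j ^ (a (j:ℕ) - 1)) := by rw [step3]
    _ = (∏ j ∈ Sc, (-(a (j:ℕ) : ℂ))) •
          Ideal.Quotient.mk J (∏ j : Fin (m+2), X j ^ (a (j:ℕ) - 1)) := by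
        rw [← smul_eq_C_mul, ← Ideal.Quotient.mkₐ_eq_mk ℂ J, map_smul]

/-- In the Milnor ring of the dual loop polynomial
`w = x_n x_1^{a_1} + ∑_{i=2}^{n} x_{i−1} x_i^{a_i}` with `n` even, one has
`[∏_{j even} x_j^{a_j−1}]² = (∏_{j odd} (−a_j)) · [∏_i x_i^{a_i−1}]` and
`[∏_{j odd} x_j^{a_j−1}]² = (∏_{j even} (−a_j)) · [∏_i x_i^{a_i−1}]`.
Indices are `0`-based via `Fin n`; the `1`-based parity of `j : Fin n` is the
parity of `(j : ℕ) + 1`. -/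
theorem dual_loop_broad_squares {n : ℕ} (hn : 2 ≤ n) (hev : Even n)
    (a : ℕ → ℕ) (ha : ∀ i < n, 2 ≤ a i)
    (w : MvPolynomial (Fin n) ℂ)
    (hw : w = ∑ i : Fin n,
      if (i : ℕ) = 0 then
        X (⟨n - 1, Nat.sub_lt (by omega) one_pos⟩ : Fin n) * X i ^ a (i : ℕ)
      else X (⟨(i : ℕ) - 1, Nat.lt_of_le_of_lt (Nat.sub_le _ _) i.isLt⟩ : Fin n) *
        X i ^ a (i : ℕ))
    (J : Ideal (MvPolynomial (Fin n) ℂ))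
    (hJ : J = Ideal.span (Set.range fun i => MvPolynomial.pderiv i w)) :
    Ideal.Quotient.mk J (∏ j ∈ Finset.univ.filter
          (fun j : Fin n => ((j : ℕ) + 1) % 2 = 0), X j ^ (a (j : ℕ) - 1)) ^ 2 =
      (∏ j ∈ Finset.univ.filter (fun j : Fin n => ((j : ℕ) + 1) % 2 = 1),
          (-(a (j : ℕ) : ℂ))) •
        Ideal.Quotient.mk J (∏ j : Fin n, X j ^ (a (j : ℕ) - 1)) ∧
    Ideal.Quotient.mk J (∏ j ∈ Finset.univ.filter
          (fun j : Fin n => ((j : ℕ) + 1) % 2 = 1), X j ^ (a (j : ℕ) - 1)) ^ 2 =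
      (∏ j ∈ Finset.univ.filter (fun j : Fin n => ((j : ℕ) + 1) % 2 = 0),
          (-(a (j : ℕ) : ℂ))) •
        Ideal.Quotient.mk J (∏ j : Fin n, X j ^ (a (j : ℕ) - 1)) := by
  obtain ⟨m, rfl⟩ : ∃ m, n = m + 2 := ⟨n - 2, by omega⟩
  have hev2 : 2 ∣ (m + 2) := hev.two_dvd
  -- rewrite w in terms of Fin subtraction
  have hw' : w = ∑ i : Fin (m+2), X (i - 1) * X i ^ a (i : ℕ) := by
    rw [hw]
    refine Finset.sum_congr rfl fun i _ => ?_
    split_ifs with h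
    · exact congrArg (fun t : Fin (m+2) => X t * X i ^ a (i:ℕ))
        (Fin.ext (by rw [fin_sub_one_val, if_pos h]; show m + 2 - 1 = m + 1; omega))
    · exact congrArg (fun t : Fin (m+2) => X t * X i ^ a (i:ℕ))
        (Fin.ext (by rw [fin_sub_one_val, if_neg h]))
  -- compute the partial derivatives
  have hd : ∀ k : Fin (m+2), pderiv k w =
      X (k+1) ^ a ((k+1 : Fin (m+2)) : ℕ) +
        C ((a (k:ℕ) : ℂ)) * (X (k-1) * X k ^ (a (k:ℕ) - 1)) := by
    intro k
    rw [hw', map_sum]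
    rw [Finset.sum_congr rfl fun i _ => pderiv_term a k i, Finset.sum_add_distrib]
    simp [Finset.sum_ite_eq']
  -- the key relation in the quotient
  have hkey : ∀ j : Fin (m+2), Ideal.Quotient.mk J (X j ^ a (j:ℕ)) =
      Ideal.Quotient.mk J (C (-(a ((j-1 : Fin (m+2)) : ℕ) : ℂ)) *
        (X (j-2) * X (j-1) ^ (a ((j-1 : Fin (m+2)) : ℕ) - 1))) := by
    intro j
    have hjj : j - 1 - 1 = j - 2 := by rw [sub_sub]; congr 1
    have h0 : Ideal.Quotient.mk J (pderiv (j-1) w) = 0 := by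
      rw [Ideal.Quotient.eq_zero_iff_mem, hJ]
      exact Ideal.subset_span ⟨j - 1, rfl⟩
    rw [hd (j-1), sub_add_cancel, map_add] at h0
    rw [← hjj, map_neg, neg_mul, map_neg]
    exact eq_neg_of_add_eq_zero_left h0
  constructor
  · have e1 : (Finset.univ.filter (fun j : Fin (m+2) => ((j:ℕ) + 1) % 2 = 0)) =
        Finset.univ.filter (fun j : Fin (m+2) => (j:ℕ) % 2 = 1) :=
      Finset.filter_congr fun j _ => by omega
    have e2 : (Finset.univ.filter (fun j : Fin (m+2) => ((j:ℕ) + 1) % 2 = 1)) =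
        Finset.univ.filter (fun j : Fin (m+2) => ¬((j:ℕ) % 2 = 1)) :=
      Finset.filter_congr fun j _ => by omega
    rw [e1, e2]
    exact dlbs_aux hev2 a ha J hkey 1 one_lt_two
  · have e3 : (Finset.univ.filter (fun j : Fin (m+2) => ((j:ℕ) + 1) % 2 = 1)) =
        Finset.univ.filter (fun j : Fin (m+2) => (j:ℕ) % 2 = 0) :=
      Finset.filter_congr fun j _ => by omega
    have e4 : (Finset.univ.filter (fun j : Fin (m+2) => ((j:ℕ) + 1) % 2 = 0)) =
        Finset.univ.filter (fun j : Fin (m+2) => ¬((j:ℕ) % 2 = 0)) :=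
      Finset.filter_congr fun j _ => by omega
    rw [e3, e4]
    exact dlbs_aux hev2 a ha J hkey 0 two_pos
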